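/- For every δ' ∈ (0,1) and every integer K ≥ 1, with probability at least 1 − δ' the following holds simultaneously for all k ∈ {1,…,K}: S_k ≤ E[τ] + L + √(2·E[τ]·L), where L = log(π²K²/(6δ')) and log denotes the natural logarithm. -/

import Mathlib

open MeasureTheory ProbabilityTheory Real
open scoped ENNReal

private lemma my_log_lb {x : ℝ} (hx : 0 ≤ x) : 2 * x / (2 + x) ≤ Real.log (1 + x) := by
  set f : ℝ → ℝ := fun z => Real.log (1 + z) - 2 * z / (2 + z) with hf
  have key : ∀ y : ℝ, 0 ≤ y → HasDerivAt f (1 / (1 + y) - 4 / (2 + y) ^ 2) y := by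
    intro y hy
    have h1 : (0:ℝ) < 1 + y := by linarith
    have h2 : (0:ℝ) < 2 + y := by linarith
    have d1 : HasDerivAt (fun z : ℝ => Real.log (1 + z)) (1 / (1 + y)) y := by
      have := ((hasDerivAt_id y).const_add 1).log h1.ne'
      simpa using this
    have d2 : HasDerivAt (fun z : ℝ => 2 * z / (2 + z)) (4 / (2 + y) ^ 2) y := by
      have hn : HasDerivAt (fun z : ℝ => 2 * z) 2 y := by
        simpa using (hasDerivAt_id y).const_mul 2
      have hd : HasDerivAt (fun z : ℝ => 2 + z) 1 y := (hasDerivAt_id y).const_add 2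
      have := hn.div hd h2.ne'
      rw [show (4:ℝ) / (2 + y) ^ 2 = (2 * (2 + y) - 2 * y * 1) / (2 + y) ^ 2 by ring]
      exact this
    exact d1.sub d2
  have hmono : MonotoneOn f (Set.Ici 0) := by
    apply monotoneOn_of_deriv_nonneg (convex_Ici 0)
    · exact fun y hy => ((key y hy).continuousAt).continuousWithinAt
    · intro y hy
      rw [interior_Ici] at hy
      exact ((key y (le_of_lt hy)).differentiableAt).differentiableWithinAt
    · intro y hy
      rw [interior_Ici, Set.mem_Ioi] at hy
      have h2 : (0:ℝ) < 2 + y := by linarith [hy.le]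
      have h1 : (0:ℝ) < 1 + y := by linarith [hy.le]
      rw [(key y hy.le).deriv]
      rw [sub_nonneg, div_le_div_iff₀ (by positivity) h1]
      nlinarith [sq_nonneg y]
  have h0 : f 0 = 0 := by simp [hf]
  have := hmono (Set.mem_Ici.mpr le_rfl) (Set.mem_Ici.mpr hx) hx
  rw [h0] at this
  simpa [hf, sub_nonneg] using this

private lemma my_count_le (k n : ℕ) :
    (∑ i ∈ Finset.Ico 1 k, if k ≤ i + n then (1:ℝ) else 0) ≤ (n:ℝ) := by
  rw [Finset.sum_boole]
  have hsub : (Finset.Ico 1 k).filter (fun i => k ≤ i + n) ⊆ Finset.Ico (k - n) k := by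
    intro i hi
    simp only [Finset.mem_filter, Finset.mem_Ico] at *
    omega
  have := Finset.card_le_card hsub
  rw [Nat.card_Ico] at this
  have h2 : ((Finset.Ico 1 k).filter (fun i => k ≤ i + n)).card ≤ n := by omega
  exact_mod_cast h2

private lemma my_integral_ite {Ω : Type*} [MeasurableSpace Ω] (μ : Measure Ω)
    [IsProbabilityMeasure μ] (g : Ω → ℕ) (hg : Measurable g) (a k : ℕ) :
    ∫ ω, (if k ≤ a + g ω then (1:ℝ) else 0) ∂μ = (μ {ω | k ≤ a + g ω}).toReal := by
  have hs : MeasurableSet {n : ℕ | k ≤ a + n} := trivial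
  have hA : MeasurableSet {ω | k ≤ a + g ω} := hg hs
  rw [show (fun ω => if k ≤ a + g ω then (1:ℝ) else 0)
      = Set.indicator {ω | k ≤ a + g ω} (fun _ => 1) from
    funext fun ω => by simp [Set.indicator_apply]]
  rw [integral_indicator_const (1:ℝ) hA]
  simp
  rfl

private lemma my_integrable_ite {Ω : Type*} [MeasurableSpace Ω] (μ : Measure Ω)
    [IsProbabilityMeasure μ] (g : Ω → ℕ) (hg : Measurable g) (a k : ℕ) :
    Integrable (fun ω => if k ≤ a + g ω then (1:ℝ) else 0) μ := by
  have hs : MeasurableSet {n : ℕ | k ≤ a + n} := trivial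
  have hA : MeasurableSet {ω | k ≤ a + g ω} := hg hs
  rw [show (fun ω => if k ≤ a + g ω then (1:ℝ) else 0)
      = Set.indicator {ω | k ≤ a + g ω} (fun _ => 1) from
    funext fun ω => by simp [Set.indicator_apply]]
  exact (integrable_const 1).indicator hA

set_option maxHeartbeats 1000000 in
theorem stmt_2 {Ω : Type*} [MeasurableSpace Ω] (μ : Measure Ω) [IsProbabilityMeasure μ]
    (τ : ℕ → Ω → ℕ) (hmeas : ∀ i, Measurable (τ i))
    (hindep : iIndepFun τ μ)
    (hident : ∀ i, IdentDistrib (τ i) (τ 1) μ μ)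
    (hint : Integrable (fun ω => (τ 1 ω : ℝ)) μ)
    (δ' : ℝ) (hδ0 : 0 < δ') (hδ1 : δ' < 1) (K : ℕ) (hK : 1 ≤ K) :
    ENNReal.ofReal (1 - δ') ≤
      μ {ω | ∀ k ∈ Finset.Icc 1 K,
        (∑ i ∈ Finset.Ico 1 k, if k ≤ i + τ i ω then (1 : ℝ) else 0)
          ≤ (∫ ω', (τ 1 ω' : ℝ) ∂μ) + Real.log (π ^ 2 * K ^ 2 / (6 * δ'))
            + Real.sqrt (2 * (∫ ω', (τ 1 ω' : ℝ) ∂μ)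
                * Real.log (π ^ 2 * K ^ 2 / (6 * δ')))} := by
  classical
  set Eτ : ℝ := ∫ ω', (τ 1 ω' : ℝ) ∂μ with hEτdef
  set L : ℝ := Real.log (π ^ 2 * K ^ 2 / (6 * δ')) with hLdef
  set B : ℝ := Eτ + L + Real.sqrt (2 * Eτ * L) with hBdef
  have hEτ0 : 0 ≤ Eτ := integral_nonneg fun ω => by positivity
  have hK1 : (1:ℝ) ≤ (K:ℝ) := by exact_mod_cast hK
  have hπ : (9:ℝ) ≤ π ^ 2 := by nlinarith [Real.pi_gt_three]
  have hL : 0 < L := by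
    apply Real.log_pos
    rw [lt_div_iff₀ (by positivity)]
    nlinarith
  have hs2 : Real.sqrt (2 * Eτ * L) ^ 2 = 2 * Eτ * L := Real.sq_sqrt (by positivity)
  have hs0 : 0 ≤ Real.sqrt (2 * Eτ * L) := Real.sqrt_nonneg _
  have hB0 : 0 ≤ B := by rw [hBdef]; linarith
  have hA : ∀ (k i : ℕ), MeasurableSet {ω | k ≤ i + τ i ω} := by
    intro k i
    have hs : MeasurableSet {n : ℕ | k ≤ i + n} := trivial
    exact (hmeas i) hs
  have hSmeas : ∀ k : ℕ,
      Measurable (fun ω => ∑ i ∈ Finset.Ico 1 k, if k ≤ i + τ i ω then (1:ℝ) else 0) := by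
    intro k
    apply Finset.measurable_sum
    intro i _
    exact Measurable.ite (hA k i) measurable_const measurable_const
  -- per-k tail bound
  have tail : ∀ k, μ {ω | ¬ (∑ i ∈ Finset.Ico 1 k, if k ≤ i + τ i ω then (1:ℝ) else 0) ≤ B}
      ≤ ENNReal.ofReal (Real.exp (-L)) := by
    intro k
    rcases eq_or_lt_of_le hEτ0 with hE0 | hEpos
    · -- the expectation is zero: all τ i vanish a.e., so the sum is a.e. zero
      have hτ0 : (fun ω => (τ 1 ω : ℝ)) =ᵐ[μ] 0 :=
        (integral_eq_zero_iff_of_nonneg (fun ω => Nat.cast_nonneg _) hint).mp hE0.symm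
      have h10 : ∀ᵐ ω ∂μ, τ 1 ω = 0 := by
        filter_upwards [hτ0] with ω hω
        have h : (τ 1 ω : ℝ) = 0 := hω
        exact_mod_cast h
      have hiae : ∀ i, ∀ᵐ ω ∂μ, τ i ω = 0 := by
        intro i
        have hsm : MeasurableSet ({0}ᶜ : Set ℕ) := trivial
        have heq := (hident i).measure_mem_eq hsm
        rw [ae_iff] at h10 ⊢
        exact heq.trans h10
      have hae : ∀ᵐ ω ∂μ, ∀ i ∈ Finset.Ico 1 k, τ i ω = 0 :=
        Filter.eventually_all_finset _ |>.mpr fun i _ => hiae i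
      have hae2 : ∀ᵐ ω ∂μ,
          (∑ i ∈ Finset.Ico 1 k, if k ≤ i + τ i ω then (1:ℝ) else 0) ≤ B := by
        filter_upwards [hae] with ω hω
        have hz : ∀ i ∈ Finset.Ico 1 k, (if k ≤ i + τ i ω then (1:ℝ) else 0) = 0 := by
          intro i hi
          rw [Finset.mem_Ico] at hi
          rw [hω i (Finset.mem_Ico.mpr hi), if_neg (by omega)]
        rw [Finset.sum_congr rfl hz, Finset.sum_const_zero]
        exact hB0
      rw [show μ {ω | ¬ (∑ i ∈ Finset.Ico 1 k, if k ≤ i + τ i ω then (1:ℝ) else 0) ≤ B} = 0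
        from ae_iff.mp hae2]
      exact zero_le
    · -- positive expectation: Chernoff + Bernstein
      set s : Finset ℕ := Finset.Ico 1 k with hsdef
      set X : ℕ → Ω → ℝ := fun i ω => if k ≤ i + τ i ω then 1 else 0 with hXdef
      have hXm : ∀ i, Measurable (X i) :=
        fun i => Measurable.ite (hA k i) measurable_const measurable_const
      have hXindep : iIndepFun X μ :=
        hindep.comp (fun i (n : ℕ) => if k ≤ i + n then (1:ℝ) else 0)
          (fun i => measurable_from_top)
      set t' : ℝ := L + Real.sqrt (2 * Eτ * L) with ht'def
      have ht'pos : 0 < t' := by rw [ht'def]; linarith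
      have hBt : B = Eτ + t' := by rw [hBdef, ht'def]; ring
      set t : ℝ := Real.log (1 + t' / Eτ) with htdef
      have hx0 : 0 < t' / Eτ := div_pos ht'pos hEpos
      have hexpt : Real.exp t = 1 + t' / Eτ := Real.exp_log (by linarith)
      have ht0 : 0 ≤ t := Real.log_nonneg (by linarith)
      have hc0 : 0 ≤ Real.exp t - 1 := by rw [hexpt]; linarith
      have hexpX : ∀ i ω, Real.exp (t * X i ω) = 1 + (Real.exp t - 1) * X i ω := by
        intro i ω
        by_cases h : k ≤ i + τ i ω <;> simp [hXdef, h] <;> ring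
      have hXint : ∀ i, Integrable (X i) μ :=
        fun i => my_integrable_ite μ (τ i) (hmeas i) i k
      have hXexpint : ∀ i, Integrable (fun ω => Real.exp (t * X i ω)) μ := by
        intro i
        simp_rw [hexpX]
        exact (integrable_const 1).add ((hXint i).const_mul _)
      set p : ℕ → ℝ := fun i => (μ {ω | k ≤ i + τ i ω}).toReal with hpdef
      have hXintegral : ∀ i, ∫ ω, X i ω ∂μ = p i :=
        fun i => my_integral_ite μ (τ i) (hmeas i) i k
      have hp0 : ∀ i, 0 ≤ p i := fun i => ENNReal.toReal_nonneg
      have hmgf : ∀ i, mgf (X i) μ t = 1 + (Real.exp t - 1) * p i := by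
        intro i
        rw [mgf]
        calc ∫ ω, Real.exp (t * X i ω) ∂μ
            = ∫ ω, (1 + (Real.exp t - 1) * X i ω) ∂μ := by simp_rw [hexpX]
          _ = 1 + (Real.exp t - 1) * p i := by
              rw [integral_add (integrable_const 1) ((hXint i).const_mul _),
                integral_const, integral_const_mul, hXintegral i]
              simp
      set m : ℝ := ∑ i ∈ s, p i with hmdef
      have hm : m ≤ Eτ := by
        have hpi : ∀ i, p i = ∫ ω, (if k ≤ i + τ 1 ω then (1:ℝ) else 0) ∂μ := by
          intro i
          rw [my_integral_ite μ (τ 1) (hmeas 1) i k]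
          exact congrArg ENNReal.toReal
            ((hident i).measure_mem_eq (show MeasurableSet {n : ℕ | k ≤ i + n} from trivial))
        calc m = ∑ i ∈ s, ∫ ω, (if k ≤ i + τ 1 ω then (1:ℝ) else 0) ∂μ :=
              Finset.sum_congr rfl fun i _ => hpi i
          _ = ∫ ω, (∑ i ∈ s, if k ≤ i + τ 1 ω then (1:ℝ) else 0) ∂μ :=
              (integral_finset_sum s fun i _ => my_integrable_ite μ (τ 1) (hmeas 1) i k).symm
          _ ≤ ∫ ω, (τ 1 ω : ℝ) ∂μ := by
              apply integral_mono
                (integrable_finset_sum s fun i _ => my_integrable_ite μ (τ 1) (hmeas 1) i k)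
                hint
              intro ω
              exact my_count_le k (τ 1 ω)
          _ = Eτ := rfl
      have hSm := hXindep.mgf_sum (t := t) hXm s
      have hSexpint : Integrable (fun ω => Real.exp (t * (∑ i ∈ s, X i) ω)) μ :=
        hXindep.integrable_exp_mul_sum hXm (fun i _ => hXexpint i)
      have hch := measure_ge_le_exp_mul_mgf (μ := μ) (X := ∑ i ∈ s, X i) B ht0 hSexpint
      have hprod : mgf (∑ i ∈ s, X i) μ t ≤ Real.exp ((Real.exp t - 1) * Eτ) := by
        rw [hSm]
        calc ∏ i ∈ s, mgf (X i) μ t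
            ≤ ∏ i ∈ s, Real.exp ((Real.exp t - 1) * p i) := by
              apply Finset.prod_le_prod
              · intro i _
                rw [hmgf i]
                nlinarith [hp0 i, hc0, mul_nonneg hc0 (hp0 i)]
              · intro i _
                rw [hmgf i]
                have := Real.add_one_le_exp ((Real.exp t - 1) * p i)
                linarith
          _ = Real.exp (∑ i ∈ s, (Real.exp t - 1) * p i) := (Real.exp_sum s _).symm
          _ = Real.exp ((Real.exp t - 1) * m) := by rw [← Finset.mul_sum, hmdef]
          _ ≤ Real.exp ((Real.exp t - 1) * Eτ) :=
              Real.exp_le_exp.mpr (mul_le_mul_of_nonneg_left hm hc0)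
      have hnum : Real.exp (-t * B) * Real.exp ((Real.exp t - 1) * Eτ) ≤ Real.exp (-L) := by
        rw [← Real.exp_add]
        apply Real.exp_le_exp.mpr
        have hEc : (Real.exp t - 1) * Eτ = t' := by
          rw [hexpt]
          field_simp
          ring
        rw [hEc, hBt]
        have hlb : 2 * (t'/Eτ) / (2 + t'/Eτ) ≤ t := my_log_lb hx0.le
        have h2 : 2 * (t'/Eτ) / (2 + t'/Eτ) = 2*t'/(2*Eτ + t') := by
          rw [div_eq_div_iff (by positivity) (by positivity)]
          field_simp
        have hlb2 : 2*t'/(2*Eτ + t') ≤ t := h2 ▸ hlb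
        have h3 : t' + L ≤ 2*t'/(2*Eτ+t') * (Eτ + t') := by
          rw [div_mul_eq_mul_div, le_div_iff₀ (by linarith)]
          nlinarith [hs2, hs0, hL.le, hEpos.le, mul_nonneg hL.le hs0]
        have h4 : 2*t'/(2*Eτ+t') * (Eτ + t') ≤ t * (Eτ + t') :=
          mul_le_mul_of_nonneg_right hlb2 (by linarith)
        have h5 : t' + L ≤ t * (Eτ + t') := h3.trans h4
        clear_value t t' B L Eτ
        linarith [h5]
      have hle : {ω | ¬ (∑ i ∈ s, if k ≤ i + τ i ω then (1:ℝ) else 0) ≤ B}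
          ⊆ {ω | B ≤ (∑ i ∈ s, X i) ω} := by
        intro ω hω
        simp only [Set.mem_setOf_eq, not_le] at hω ⊢
        rw [Finset.sum_apply]
        exact hω.le
      calc μ {ω | ¬ (∑ i ∈ s, if k ≤ i + τ i ω then (1:ℝ) else 0) ≤ B}
          ≤ μ {ω | B ≤ (∑ i ∈ s, X i) ω} := measure_mono hle
        _ = ENNReal.ofReal ((μ {ω | B ≤ (∑ i ∈ s, X i) ω}).toReal) :=
            (ENNReal.ofReal_toReal (measure_ne_top μ _)).symm
        _ ≤ ENNReal.ofReal (Real.exp (-L)) := by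
            apply ENNReal.ofReal_le_ofReal
            refine hch.trans ?_
            calc Real.exp (-t * B) * mgf (∑ i ∈ s, X i) μ t
                ≤ Real.exp (-t * B) * Real.exp ((Real.exp t - 1) * Eτ) :=
                  mul_le_mul_of_nonneg_left hprod (Real.exp_pos _).le
              _ ≤ Real.exp (-L) := hnum
  -- union bound
  set G := {ω | ∀ k ∈ Finset.Icc 1 K,
      (∑ i ∈ Finset.Ico 1 k, if k ≤ i + τ i ω then (1:ℝ) else 0) ≤ B} with hGdef
  have hGm : MeasurableSet G := by
    have : G = ⋂ k ∈ Finset.Icc 1 K,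
        {ω | (∑ i ∈ Finset.Ico 1 k, if k ≤ i + τ i ω then (1:ℝ) else 0) ≤ B} := by
      ext ω; simp [hGdef]
    rw [this]
    exact Finset.measurableSet_biInter _ fun k _ =>
      measurableSet_le (hSmeas k) measurable_const
  have hGc : Gᶜ ⊆ ⋃ k ∈ Finset.Icc 1 K,
      {ω | ¬ (∑ i ∈ Finset.Ico 1 k, if k ≤ i + τ i ω then (1:ℝ) else 0) ≤ B} := by
    intro ω hω
    simp only [hGdef, Set.mem_compl_iff, Set.mem_setOf_eq, not_forall] at hω
    obtain ⟨k, hk, hkω⟩ := hω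
    exact Set.mem_biUnion hk hkω
  have hGcb : μ Gᶜ ≤ ENNReal.ofReal δ' := by
    calc μ Gᶜ ≤ μ (⋃ k ∈ Finset.Icc 1 K,
        {ω | ¬ (∑ i ∈ Finset.Ico 1 k, if k ≤ i + τ i ω then (1:ℝ) else 0) ≤ B}) :=
          measure_mono hGc
      _ ≤ ∑ k ∈ Finset.Icc 1 K,
          μ {ω | ¬ (∑ i ∈ Finset.Ico 1 k, if k ≤ i + τ i ω then (1:ℝ) else 0) ≤ B} :=
          measure_biUnion_finset_le _ _
      _ ≤ ∑ k ∈ Finset.Icc 1 K, ENNReal.ofReal (Real.exp (-L)) :=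
          Finset.sum_le_sum fun k _ => tail k
      _ = (K : ENNReal) * ENNReal.ofReal (Real.exp (-L)) := by
          rw [Finset.sum_const, Nat.card_Icc]
          simp [nsmul_eq_mul]
      _ ≤ ENNReal.ofReal δ' := by
          have hexpL : Real.exp (-L) = 6 * δ' / (π ^ 2 * K ^ 2) := by
            rw [hLdef, ← Real.log_inv, Real.exp_log (by positivity), inv_div]
          rw [hexpL, ← ENNReal.ofReal_natCast K, ← ENNReal.ofReal_mul (by positivity)]
          apply ENNReal.ofReal_le_ofReal
          rw [mul_div_assoc', div_le_iff₀ (by positivity)]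
          have hKK : (K:ℝ) ≤ (K:ℝ)^2 := by nlinarith
          have e1 : (K:ℝ) * (6*δ') ≤ (K:ℝ)^2 * (6*δ') :=
            mul_le_mul_of_nonneg_right hKK (by positivity)
          have e2 : (K:ℝ)^2 * (6*δ') ≤ (K:ℝ)^2 * (π^2*δ') := by
            apply mul_le_mul_of_nonneg_left _ (sq_nonneg _)
            nlinarith
          nlinarith [e1, e2]
  have hG1 : μ G = 1 - μ Gᶜ := by
    have := prob_compl_eq_one_sub (μ := μ) hGm.compl
    rwa [compl_compl] at this
  rw [hG1]
  have h1 : ENNReal.ofReal (1 - δ') ≤ 1 - ENNReal.ofReal δ' := by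
    rw [ENNReal.ofReal_sub _ hδ0.le, ENNReal.ofReal_one]
  have h2 : (1:ENNReal) - ENNReal.ofReal δ' ≤ 1 - μ Gᶜ := tsub_le_tsub_left hGcb 1
  exact h1.trans h2
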